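/- Let m be a positive integer and α > 0. Then 1 / ∏_{j=1}^{2m} Γ(α + (j-1)/2) = D_m · ((2m)^{2mα} / Γ(2mα)) · ∏_{j=2}^{m} ∫_0^1 ρ^{2α + (j-1)/m - 1} (1-ρ)^{(2 - 1/m)(j-1) - 1} dρ, where D_m = (∏_{j=1}^{m} 2^{2(j-1)-1}) · (2π)^{(1-m)/2} · m^{-1/2} / (π^{m/2} ∏_{j=2}^{m} Γ((2 - 1/m)(j-1))). -/

import Mathlib

open Real MeasureTheory Finset

lemma realBeta {a b : ℝ} (ha : 0 < a) (hb : 0 < b) :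
    ∫ x in Set.Ioo (0:ℝ) 1, x ^ (a-1) * (1-x) ^ (b-1) =
      Real.Gamma a * Real.Gamma b / Real.Gamma (a+b) := by
  have key : Complex.Gamma a * Complex.Gamma b
      = Complex.Gamma (a+b) * Complex.betaIntegral a b := by
    have := Complex.Gamma_mul_Gamma_eq_betaIntegral (s := (a:ℂ)) (t := (b:ℂ))
      (by simpa using ha) (by simpa using hb)
    simpa using this
  have hbeta : Complex.betaIntegral a b
      = ((∫ x in Set.Ioo (0:ℝ) 1, x ^ (a-1) * (1-x) ^ (b-1) : ℝ) : ℂ) := by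
    rw [Complex.betaIntegral, intervalIntegral.integral_of_le zero_le_one,
      ← MeasureTheory.integral_Ioc_eq_integral_Ioo]
    have step1 : (∫ x in Set.Ioc (0:ℝ) 1, (x:ℂ) ^ ((a:ℂ)-1) * (1-(x:ℂ)) ^ ((b:ℂ)-1))
        = ∫ x in Set.Ioc (0:ℝ) 1, ((x ^ (a-1) * (1-x) ^ (b-1) : ℝ) : ℂ) := by
      refine setIntegral_congr_ae measurableSet_Ioc ?_
      filter_upwards [] with x
      intro hx
      rw [Complex.ofReal_mul, Complex.ofReal_cpow hx.1.le,
        Complex.ofReal_cpow (by linarith [hx.2] : (0:ℝ) ≤ 1 - x)]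
      push_cast
      ring
    rw [step1]
    exact integral_ofReal
  have hne : Complex.Gamma (a+b) ≠ 0 := by
    rw [(by push_cast; ring : ((a:ℂ)+b) = ((a+b : ℝ) : ℂ)), Complex.Gamma_ofReal]
    exact_mod_cast (Real.Gamma_pos_of_pos (by linarith)).ne'
  rw [hbeta] at key
  have : ((Real.Gamma a * Real.Gamma b : ℝ) : ℂ)
      = ((Real.Gamma (a+b) * ∫ x in Set.Ioo (0:ℝ) 1, x ^ (a-1) * (1-x) ^ (b-1) : ℝ) : ℂ) := by
    push_cast
    rw [← Complex.Gamma_ofReal, ← Complex.Gamma_ofReal, ← Complex.Gamma_ofReal] at *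
    push_cast at key ⊢
    exact key
  have h2 := Complex.ofReal_injective this
  have hG : Real.Gamma (a+b) ≠ 0 := (Real.Gamma_pos_of_pos (by linarith)).ne'
  field_simp
  linarith [h2]

lemma abs_one_sub_exp (θ : ℝ) (h0 : 0 ≤ θ/2) (h1 : θ/2 ≤ π) :
    ‖(1 - Complex.exp (θ * Complex.I))‖ = 2 * Real.sin (θ/2) := by
  have hs : 0 ≤ Real.sin (θ/2) := Real.sin_nonneg_of_nonneg_of_le_pi h0 h1
  have h2 : (‖(1 - Complex.exp (θ * Complex.I))‖)^2 = 2 - 2*Real.cos θ := by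
    rw [Complex.sq_norm, Complex.exp_mul_I]
    simp [Complex.normSq_apply, Complex.cos_ofReal_re, Complex.sin_ofReal_re]
    nlinarith [Real.sin_sq_add_cos_sq θ]
  have h3 : Real.sin (θ/2)^2 = 1/2 - Real.cos θ / 2 := by
    have := Real.sin_sq_eq_half_sub (θ/2)
    rw [show 2*(θ/2) = θ by ring] at this
    linarith
  nlinarith [norm_nonneg (1 - Complex.exp (θ * Complex.I)), h2, h3, hs]

lemma prod_sin (n : ℕ) :
    (2:ℝ)^n * ∏ k ∈ range n, Real.sin (π * (k+1) / (n+1)) = n+1 := by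
  have hμ := Complex.isPrimitiveRoot_exp (n+1) (Nat.succ_ne_zero n)
  have h := hμ.prod_one_sub_pow_eq_order
  have habs := congrArg (‖·‖) h
  rw [Complex.norm_prod] at habs
  push_cast at habs
  have hterm : ∀ k ∈ range n, ‖(1 - Complex.exp (2*π*Complex.I/((n:ℂ)+1)) ^ (k+1))‖
      = 2 * Real.sin (π * (k+1) / (n+1)) := by
    intro k hk
    have hkn : (k:ℝ) < n := by exact_mod_cast mem_range.mp hk
    have hn1 : (0:ℝ) < (n:ℝ) + 1 := by positivity
    have hexp : Complex.exp (2*π*Complex.I/((n:ℂ)+1)) ^ (k+1)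
        = Complex.exp (((2*π*(k+1)/(n+1) : ℝ) : ℂ) * Complex.I) := by
      rw [← Complex.exp_nat_mul]
      congr 1
      have hne : ((n:ℂ)+1) ≠ 0 := by
        have := Nat.cast_add_one_ne_zero (R := ℂ) n
        push_cast at this ⊢; exact this
      push_cast
      field_simp
    rw [hexp, abs_one_sub_exp]
    · rw [show (2*π*((k:ℝ)+1)/((n:ℝ)+1))/2 = π * ((k:ℝ)+1) / ((n:ℝ)+1) by ring]
    · positivity
    · rw [show (2*π*((k:ℝ)+1)/((n:ℝ)+1))/2 = π * (((k:ℝ)+1) / ((n:ℝ)+1)) by ring]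
      have hle : ((k:ℝ)+1)/((n:ℝ)+1) ≤ 1 := by
        rw [div_le_one hn1]; linarith
      nlinarith [Real.pi_pos]
  rw [Finset.prod_congr rfl hterm, Finset.prod_mul_distrib, Finset.prod_const,
    Finset.card_range] at habs
  have habs2 : ‖((n:ℂ)+1)‖ = (n:ℝ)+1 := by
    rw [show ((n:ℂ)+1) = ((n+1 : ℝ):ℂ) by push_cast; ring, Complex.norm_real, Real.norm_eq_abs,
      abs_of_pos (by positivity)]
  rw [habs2] at habs
  exact habs

lemma prod_gamma_frac (n : ℕ) :
    ∏ k ∈ range n, Real.Gamma (((k:ℝ)+1)/((n:ℝ)+1)) = Real.sqrt ((2*π)^n / ((n:ℝ)+1)) := by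
  set P := ∏ k ∈ range n, Real.Gamma (((k:ℝ)+1)/((n:ℝ)+1)) with hP
  have hn1 : (0:ℝ) < (n:ℝ)+1 := by positivity
  have hxpos : ∀ k ∈ range n, (0:ℝ) < ((k:ℝ)+1)/((n:ℝ)+1) := by
    intro k hk; positivity
  have hPpos : 0 < P := Finset.prod_pos fun k hk => Real.Gamma_pos_of_pos (hxpos k hk)
  have hsinpos : ∀ k ∈ range n, (0:ℝ) < Real.sin (π * ((k:ℝ)+1) / ((n:ℝ)+1)) := by
    intro k hk
    have hkn : (k:ℝ) < n := by exact_mod_cast mem_range.mp hk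
    apply Real.sin_pos_of_pos_of_lt_pi
    · positivity
    · rw [div_lt_iff₀ hn1]
      nlinarith [Real.pi_pos]
  -- reversed product
  have hrev : ∏ k ∈ range n, Real.Gamma (1 - ((k:ℝ)+1)/((n:ℝ)+1)) = P := by
    rw [hP, ← Finset.prod_range_reflect]
    refine Finset.prod_congr rfl fun k hk => ?_
    have hkn : k < n := mem_range.mp hk
    congr 1
    have : ((n - 1 - k : ℕ) : ℝ) = (n:ℝ) - 1 - k := by
      have h1 : k ≤ n - 1 := Nat.le_sub_one_of_lt hkn
      have h2 : 1 ≤ n := Nat.one_le_of_lt (Nat.lt_of_le_of_lt (Nat.zero_le k) hkn)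
      push_cast [Nat.cast_sub h1, Nat.cast_sub h2]
      ring
    rw [this]
    field_simp
    ring
  have hsq : P^2 = (2*π)^n / ((n:ℝ)+1) := by
    have : P^2 = ∏ k ∈ range n,
        (Real.Gamma (((k:ℝ)+1)/((n:ℝ)+1)) * Real.Gamma (1 - ((k:ℝ)+1)/((n:ℝ)+1))) := by
      rw [Finset.prod_mul_distrib, hrev, ← hP, sq]
    rw [this]
    have : ∀ k ∈ range n,
        Real.Gamma (((k:ℝ)+1)/((n:ℝ)+1)) * Real.Gamma (1 - ((k:ℝ)+1)/((n:ℝ)+1))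
          = π / Real.sin (π * ((k:ℝ)+1) / ((n:ℝ)+1)) := by
      intro k hk
      rw [Real.Gamma_mul_Gamma_one_sub, mul_div_assoc]
    rw [Finset.prod_congr rfl this, Finset.prod_div_distrib, Finset.prod_const,
      Finset.card_range]
    have hps := prod_sin n
    have hprodpos : 0 < ∏ k ∈ range n, Real.sin (π * ((k:ℝ)+1) / ((n:ℝ)+1)) :=
      Finset.prod_pos hsinpos
    rw [eq_div_iff hn1.ne', div_mul_eq_mul_div, div_eq_iff hprodpos.ne']
    calc π^n * ((n:ℝ)+1) = π^n * ((2:ℝ)^n * ∏ k ∈ range n, Real.sin (π * ((k:ℝ)+1) / ((n:ℝ)+1))) := by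
          rw [hps]
      _ = (2*π)^n * ∏ k ∈ range n, Real.sin (π * ((k:ℝ)+1) / ((n:ℝ)+1)) := by
          rw [mul_pow]; ring
  rw [← hsq, Real.sqrt_sq hPpos.le]

noncomputable def multG (m : ℕ) (s : ℝ) : ℝ :=
  (∏ k ∈ range m, Real.Gamma ((s + k)/(m:ℝ))) * (m:ℝ) ^ (s - 1/2) * (2*π) ^ ((1-(m:ℝ))/2)

lemma multG_pos {m : ℕ} (hm : 0 < m) {s : ℝ} (hs : 0 < s) : 0 < multG m s := by
  have hm' : (0:ℝ) < m := by exact_mod_cast hm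
  refine mul_pos (mul_pos (Finset.prod_pos fun k _ => Real.Gamma_pos_of_pos ?_) ?_) ?_
  · positivity
  · exact Real.rpow_pos_of_pos hm' _
  · exact Real.rpow_pos_of_pos (by positivity) _

lemma multG_add_one {m : ℕ} (hm : 0 < m) {s : ℝ} (hs : 0 < s) :
    multG m (s+1) = s * multG m s := by
  have hm' : (0:ℝ) < m := by exact_mod_cast hm
  have hsm : (0:ℝ) < s / m := by positivity
  have hprod : ∏ k ∈ range m, Real.Gamma ((s+1 + k)/(m:ℝ))
      = (s/m) * ∏ k ∈ range m, Real.Gamma ((s + k)/(m:ℝ)) := by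
    have h1 : ∏ k ∈ range (m+1), Real.Gamma ((s + k)/(m:ℝ))
        = (∏ k ∈ range m, Real.Gamma ((s + k)/(m:ℝ))) * ((s/m) * Real.Gamma (s/m)) := by
      rw [Finset.prod_range_succ]
      congr 1
      rw [show (s + (m:ℝ))/(m:ℝ) = s/m + 1 by field_simp, Real.Gamma_add_one hsm.ne']
    have h2 : ∏ k ∈ range (m+1), Real.Gamma ((s + k)/(m:ℝ))
        = (∏ k ∈ range m, Real.Gamma ((s+1 + k)/(m:ℝ))) * Real.Gamma (s/m) := by
      rw [Finset.prod_range_succ']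
      congr 1
      · refine Finset.prod_congr rfl fun k _ => ?_
        congr 1
        push_cast
        ring
      · norm_num
    have hG : Real.Gamma (s/m) ≠ 0 := (Real.Gamma_pos_of_pos hsm).ne'
    have key : (∏ k ∈ range m, Real.Gamma ((s+1 + k)/(m:ℝ))) * Real.Gamma (s/m)
        = ((s/m) * ∏ k ∈ range m, Real.Gamma ((s + k)/(m:ℝ))) * Real.Gamma (s/m) := by
      rw [← h2, h1]; ring
    exact mul_right_cancel₀ hG key
  rw [multG, multG, hprod, show s + 1 - 1/2 = (s - 1/2) + 1 by ring,
    Real.rpow_add hm', Real.rpow_one]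
  field_simp

lemma multG_one {m : ℕ} (hm : 0 < m) : multG m 1 = 1 := by
  obtain ⟨n, rfl⟩ : ∃ n, m = n + 1 := ⟨m - 1, (Nat.succ_pred_eq_of_pos hm).symm⟩
  have h2π : (0:ℝ) < 2*π := by positivity
  have hn1 : (0:ℝ) < (n:ℝ)+1 := by positivity
  have hprod : ∏ k ∈ range (n+1), Real.Gamma ((1 + k)/((n+1:ℕ):ℝ))
      = Real.sqrt ((2*π)^n / ((n:ℝ)+1)) := by
    rw [Finset.prod_range_succ]
    push_cast
    rw [show ((1:ℝ) + n)/((n:ℝ)+1) = 1 by rw [add_comm]; field_simp, Real.Gamma_one, mul_one,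
      ← prod_gamma_frac n]
    refine Finset.prod_congr rfl fun k _ => ?_
    congr 1
    ring
  rw [multG, hprod]
  rw [Real.sqrt_eq_rpow, Real.div_rpow (by positivity) hn1.le, ← Real.rpow_natCast (2*π) n,
    ← Real.rpow_mul h2π.le]
  push_cast
  rw [show (1:ℝ) - 1/2 = 1/2 by norm_num,
    div_mul_cancel₀ _ (Real.rpow_pos_of_pos hn1 ((1:ℝ)/2)).ne',
    ← Real.rpow_add h2π,
    show (n:ℝ)*(1/2) + (1-((n:ℝ)+1))/2 = 0 by ring, Real.rpow_zero]



lemma convexOn_sum_aux {ι : Type*} (t : Finset ι) (f : ι → ℝ → ℝ) {s : Set ℝ}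
    (hs : Convex ℝ s) (h : ∀ i ∈ t, ConvexOn ℝ s (f i)) :
    ConvexOn ℝ s (fun x => ∑ i ∈ t, f i x) := by
  classical
  induction t using Finset.induction_on with
  | empty => simpa using convexOn_const 0 hs
  | insert i t' hit ih =>
    have : (fun x => ∑ j ∈ insert i t', f j x) = fun x => f i x + ∑ j ∈ t', f j x := by
      funext x; rw [Finset.sum_insert hit]
    rw [this]
    exact (h i (Finset.mem_insert_self i t')).add
      (ih fun j hj => h j (Finset.mem_insert_of_mem hj))

lemma convexOn_log_Gamma_affine {c : ℝ} (hc : 0 < c) {d : ℝ} (hd : 0 ≤ d) :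
    ConvexOn ℝ (Set.Ioi 0) (fun s : ℝ => Real.log (Real.Gamma (c * s + d))) := by
  refine ⟨convex_Ioi 0, fun x hx y hy a b ha hb hab => ?_⟩
  have hx' : (0:ℝ) < c * x + d := by
    have : (0:ℝ) < x := hx
    positivity
  have hy' : (0:ℝ) < c * y + d := by
    have : (0:ℝ) < y := hy
    positivity
  have key := Real.convexOn_log_Gamma.2 (Set.mem_Ioi.mpr hx') (Set.mem_Ioi.mpr hy') ha hb hab
  simp only [Function.comp_apply, smul_eq_mul] at key ⊢
  have harg : c * (a * x + b * y) + d = a * (c * x + d) + b * (c * y + d) := by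
    have : a + b = 1 := hab
    nlinarith [this]
  rw [harg]
  exact key

lemma multG_log_convex {m : ℕ} (hm : 0 < m) :
    ConvexOn ℝ (Set.Ioi 0) (Real.log ∘ multG m) := by
  have hm' : (0:ℝ) < m := by exact_mod_cast hm
  have hm1 : (1:ℝ) ≤ m := by exact_mod_cast hm
  have h2π : (0:ℝ) < 2*π := by positivity
  have heq : Set.EqOn (Real.log ∘ multG m)
      (fun s => (∑ k ∈ range m, Real.log (Real.Gamma ((1/(m:ℝ)) * s + (k:ℝ)/(m:ℝ))))
        + (Real.log m * s + (-(1/2) * Real.log m + ((1-(m:ℝ))/2) * Real.log (2*π))))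
      (Set.Ioi 0) := by
    intro s hs
    have hs' : (0:ℝ) < s := hs
    have hGpos : ∀ k ∈ range m, (0:ℝ) < Real.Gamma ((s + k)/(m:ℝ)) := by
      intro k _; exact Real.Gamma_pos_of_pos (by positivity)
    have hprodpos : (0:ℝ) < ∏ k ∈ range m, Real.Gamma ((s + k)/(m:ℝ)) :=
      Finset.prod_pos hGpos
    have : Real.log (multG m s)
        = Real.log (∏ k ∈ range m, Real.Gamma ((s + k)/(m:ℝ)))
          + (s - 1/2) * Real.log m + ((1-(m:ℝ))/2) * Real.log (2*π) := by
      rw [multG, Real.log_mul (by positivity) (Real.rpow_pos_of_pos h2π _).ne',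
        Real.log_mul hprodpos.ne' (Real.rpow_pos_of_pos hm' _).ne',
        Real.log_rpow hm', Real.log_rpow h2π]
    simp only [Function.comp_apply]
    rw [this, Real.log_prod (fun k hk => (hGpos k hk).ne')]
    have : ∀ k ∈ range m, Real.log (Real.Gamma ((s + k)/(m:ℝ)))
        = Real.log (Real.Gamma ((1/(m:ℝ)) * s + (k:ℝ)/(m:ℝ))) := by
      intro k _
      congr 2
      field_simp
    rw [Finset.sum_congr rfl this]
    ring
  refine ConvexOn.congr ?_ heq.symm
  refine ConvexOn.add ?_ ?_
  · refine convexOn_sum_aux _ _ (convex_Ioi 0) fun k _ => ?_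
    exact convexOn_log_Gamma_affine (by positivity) (by positivity)
  · refine ConvexOn.add_const ?_ _
    have := (convexOn_id (convex_Ioi (0:ℝ))).smul (Real.log_nonneg hm1)
    simp only [smul_eq_mul, id] at this; exact this

lemma multG_eq_Gamma {m : ℕ} (hm : 0 < m) {s : ℝ} (hs : 0 < s) :
    multG m s = Real.Gamma s :=
  Real.eq_Gamma_of_log_convex (multG_log_convex hm)
    (fun {y} hy => multG_add_one hm hy) (fun {y} hy => multG_pos hm hy) (multG_one hm) hs

lemma gauss_mult {m : ℕ} (hm : 0 < m) {s : ℝ} (hs : 0 < s) :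
    ∏ k ∈ range m, Real.Gamma ((s + k)/(m:ℝ))
      = Real.Gamma s * (m:ℝ) ^ ((1:ℝ)/2 - s) * (2*π) ^ (((m:ℝ)-1)/2) := by
  have hm' : (0:ℝ) < m := by exact_mod_cast hm
  have h2π : (0:ℝ) < 2*π := by positivity
  have h := multG_eq_Gamma hm hs
  rw [multG] at h
  have h1 : (m:ℝ) ^ (s - 1/2) ≠ 0 := (Real.rpow_pos_of_pos hm' _).ne'
  have h2 : (2*π) ^ ((1-(m:ℝ))/2) ≠ 0 := (Real.rpow_pos_of_pos h2π _).ne'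
  have : ∏ k ∈ range m, Real.Gamma ((s + k)/(m:ℝ))
      = Real.Gamma s * ((m:ℝ) ^ (s - 1/2))⁻¹ * (((2*π) ^ ((1-(m:ℝ))/2))⁻¹) := by
    rw [← h]
    field_simp
  rw [this, ← Real.rpow_neg hm'.le, ← Real.rpow_neg h2π.le,
    show -(s - 1/2) = (1:ℝ)/2 - s by ring, show -((1-(m:ℝ))/2) = ((m:ℝ)-1)/2 by ring]

lemma rpow_sum_aux {x : ℝ} (hx : 0 < x) {ι : Type*} (t : Finset ι) (f : ι → ℝ) :
    ∏ i ∈ t, x ^ (f i) = x ^ (∑ i ∈ t, f i) := by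
  classical
  induction t using Finset.induction_on with
  | empty => simp
  | insert i t' hit ih =>
    rw [Finset.prod_insert hit, Finset.sum_insert hit, Real.rpow_add hx, ih]

lemma prod_range_two_mul (m : ℕ) (f : ℕ → ℝ) :
    ∏ j ∈ range (2*m), f j = ∏ k ∈ range m, (f (2*k) * f (2*k+1)) := by
  induction m with
  | zero => simp
  | succ n ih =>
    rw [show 2*(n+1) = 2*n + 1 + 1 by ring, Finset.prod_range_succ, Finset.prod_range_succ,
      ih, Finset.prod_range_succ]
    ring

lemma prod_Icc_one_eq (n : ℕ) (f : ℕ → ℝ) :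
    ∏ j ∈ Icc 1 n, f j = ∏ k ∈ range n, f (k+1) := by
  rw [← Finset.Ico_add_one_right_eq_Icc, Finset.prod_Ico_eq_prod_range]
  simp [add_comm]

lemma prod_Icc_two_eq (n : ℕ) (f : ℕ → ℝ) :
    ∏ j ∈ Icc 2 n, f j = ∏ k ∈ range (n-1), f (k+2) := by
  rw [← Finset.Ico_add_one_right_eq_Icc, Finset.prod_Ico_eq_prod_range]
  have : n + 1 - 2 = n - 1 := by omega
  rw [this]
  refine Finset.prod_congr rfl fun k _ => ?_
  congr 1
  omega

lemma sum_range_cast (m : ℕ) : ∑ k ∈ range m, (k:ℝ) = (m:ℝ) * ((m:ℝ)-1) / 2 := by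
  induction m with
  | zero => simp
  | succ n ih => rw [Finset.sum_range_succ, ih]; push_cast; ring

lemma endgame (a b2 b3 b4 c d u v w G H P Q : ℝ)
    (ha : a ≠ 0) (hG : G ≠ 0) (hH : H ≠ 0) (hP : P ≠ 0) (hQ : Q ≠ 0)
    (hc : c ≠ 0) (hu : u ≠ 0) (hv : v ≠ 0) (hb2 : b2 ≠ 0) (hb3 : b3 ≠ 0)
    (k1 : c * d = 1) (k3 : u * (v * w) = 1) (k4 : b2 * (b3 * b4) = 1) :
    1 / (a * b2 * (G * Q)) = b3 * c * u / (a * P) * (b4 * w / H) * ((H * v * d / G * P) / Q) := by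
  have hd : d = c⁻¹ := eq_inv_of_mul_eq_one_left (by rw [mul_comm]; exact k1)
  have hw : w = (u * v)⁻¹ := eq_inv_of_mul_eq_one_left (by rw [mul_comm, mul_assoc]; exact k3)
  have hb4 : b4 = (b2 * b3)⁻¹ := eq_inv_of_mul_eq_one_left (by rw [mul_comm, mul_assoc]; exact k4)
  subst hd hw hb4
  field_simp

theorem stmt_13 (m : ℕ) (hm : 0 < m) (α : ℝ) (hα : 0 < α) :
    1 / ∏ j ∈ Finset.Icc 1 (2 * m), Real.Gamma (α + ((j : ℝ) - 1) / 2) =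
      ((∏ j ∈ Finset.Icc 1 m, (2 : ℝ) ^ (2 * ((j : ℝ) - 1) - 1)) *
          (2 * π) ^ ((1 - (m : ℝ)) / 2) * (m : ℝ) ^ (-(1 : ℝ) / 2) /
          (π ^ ((m : ℝ) / 2) *
            ∏ j ∈ Finset.Icc 2 m, Real.Gamma ((2 - 1 / (m : ℝ)) * ((j : ℝ) - 1)))) *
        ((2 * (m : ℝ)) ^ (2 * (m : ℝ) * α) / Real.Gamma (2 * (m : ℝ) * α)) *
        ∏ j ∈ Finset.Icc 2 m,
          ∫ ρ in Set.Ioo (0 : ℝ) 1,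
            ρ ^ (2 * α + ((j : ℝ) - 1) / (m : ℝ) - 1) *
              (1 - ρ) ^ ((2 - 1 / (m : ℝ)) * ((j : ℝ) - 1) - 1) := by
  have hm' : (0:ℝ) < m := by exact_mod_cast hm
  have hm1 : (1:ℝ) ≤ m := by exact_mod_cast hm
  have h2π : (0:ℝ) < 2*π := by positivity
  have hπ : (0:ℝ) < π := pi_pos
  -- Step I: evaluate the integrals
  have hint : ∀ j ∈ Icc 2 m,
      (∫ ρ in Set.Ioo (0:ℝ) 1, ρ ^ (2*α + ((j:ℝ)-1)/(m:ℝ) - 1) *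
        (1-ρ) ^ ((2 - 1/(m:ℝ))*((j:ℝ)-1) - 1))
      = Real.Gamma (2*α + ((j:ℝ)-1)/(m:ℝ)) * Real.Gamma ((2-1/(m:ℝ))*((j:ℝ)-1))
        / Real.Gamma (2*α + 2*((j:ℝ)-1)) := by
    intro j hj
    obtain ⟨hj2, hjm⟩ := Finset.mem_Icc.mp hj
    have hj2' : (2:ℝ) ≤ j := by exact_mod_cast hj2
    have hj1 : (0:ℝ) < (j:ℝ) - 1 := by linarith
    have ha : 0 < 2*α + ((j:ℝ)-1)/(m:ℝ) := by positivity
    have hb : 0 < (2 - 1/(m:ℝ))*((j:ℝ)-1) := by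
      have h1m : 1/(m:ℝ) ≤ 1 := by
        rw [div_le_one hm']; exact hm1
      have : (0:ℝ) < 2 - 1/(m:ℝ) := by linarith
      positivity
    rw [realBeta ha hb]
    congr 2
    field_simp
    ring
  rw [Finset.prod_congr rfl hint, Finset.prod_div_distrib, Finset.prod_mul_distrib]
  -- Step II: Gauss multiplication
  have hGauss := gauss_mult hm (s := 2*(m:ℝ)*α) (by positivity)
  have hconv : ∀ k ∈ range m, Real.Gamma ((2*(m:ℝ)*α + (k:ℕ))/(m:ℝ))
      = Real.Gamma (2*α + (k:ℝ)/(m:ℝ)) := by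
    intro k _
    congr 1
    field_simp
  rw [Finset.prod_congr rfl hconv] at hGauss
  have hsplit : ∏ k ∈ range m, Real.Gamma (2*α + (k:ℝ)/(m:ℝ))
      = Real.Gamma (2*α) * ∏ j ∈ Icc 2 m, Real.Gamma (2*α + ((j:ℝ)-1)/(m:ℝ)) := by
    obtain ⟨n, rfl⟩ : ∃ n, m = n + 1 := ⟨m - 1, (Nat.succ_pred_eq_of_pos hm).symm⟩
    rw [Finset.prod_range_succ', prod_Icc_two_eq,
      show Real.Gamma (2*α + ((0:ℕ):ℝ)/((n+1:ℕ):ℝ)) = Real.Gamma (2*α) by norm_num, mul_comm]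
    congr 1
    refine Finset.prod_congr rfl fun k _ => ?_
    congr 1
    push_cast
    ring
  have haj : ∏ j ∈ Icc 2 m, Real.Gamma (2*α + ((j:ℝ)-1)/(m:ℝ))
      = Real.Gamma (2*(m:ℝ)*α) * (m:ℝ) ^ ((1:ℝ)/2 - 2*(m:ℝ)*α) * (2*π) ^ (((m:ℝ)-1)/2)
        / Real.Gamma (2*α) := by
    rw [eq_div_iff (Real.Gamma_pos_of_pos (by positivity : (0:ℝ) < 2*α)).ne', mul_comm, ← hsplit,
      hGauss]
  -- Step III: LHS pairing via duplication
  have hLHS : ∏ j ∈ Icc 1 (2*m), Real.Gamma (α + ((j:ℝ)-1)/2)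
      = π^((m:ℝ)/2) * 2^((m:ℝ) - 2*(m:ℝ)*α - (m:ℝ)*((m:ℝ)-1))
        * ∏ k ∈ range m, Real.Gamma (2*α+2*(k:ℝ)) := by
    rw [prod_Icc_one_eq, prod_range_two_mul]
    have hterm : ∀ k ∈ range m,
        Real.Gamma (α + (((2*k+1:ℕ):ℝ)-1)/2) * Real.Gamma (α + (((2*k+1+1:ℕ):ℝ)-1)/2)
        = Real.Gamma (2*α+2*(k:ℝ)) * 2^(1 - 2*α - 2*(k:ℝ)) * π^((1:ℝ)/2) := by
      intro k _
      have h1 : α + (((2*k+1:ℕ):ℝ)-1)/2 = α + k := by push_cast; ring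
      have h2 : α + (((2*k+1+1:ℕ):ℝ)-1)/2 = (α + k) + 1/2 := by push_cast; ring
      rw [h1, h2, Real.Gamma_mul_Gamma_add_half, Real.sqrt_eq_rpow,
        show (2*(α + (k:ℝ))) = 2*α+2*(k:ℝ) by ring,
        show (1 - (2*α+2*(k:ℝ))) = 1-2*α-2*(k:ℝ) by ring]
    rw [Finset.prod_congr rfl hterm, Finset.prod_mul_distrib, Finset.prod_mul_distrib,
      rpow_sum_aux two_pos, rpow_sum_aux hπ, Finset.sum_const, Finset.card_range]
    have hsum : ∑ k ∈ range m, (1 - 2*α - 2*(k:ℝ))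
        = (m:ℝ) - 2*(m:ℝ)*α - (m:ℝ)*((m:ℝ)-1) := by
      rw [Finset.sum_sub_distrib, Finset.sum_sub_distrib, Finset.sum_const, Finset.card_range,
        ← Finset.mul_sum, ← Finset.mul_sum, Finset.sum_const, Finset.card_range, sum_range_cast]
      push_cast
      ring
    rw [hsum, nsmul_eq_mul, show ((m:ℝ) * ((1:ℝ)/2)) = (m:ℝ)/2 by ring]
    ring
  -- Step IV: power of two product
  have h2prod : ∏ j ∈ Icc 1 m, (2:ℝ) ^ (2*((j:ℝ)-1)-1) = 2^((m:ℝ)*((m:ℝ)-1) - (m:ℝ)) := by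
    rw [prod_Icc_one_eq, rpow_sum_aux two_pos]
    congr 1
    rw [show (∑ k ∈ range m, (2*(((k+1:ℕ):ℝ)-1)-1)) = ∑ k ∈ range m, (2*(k:ℝ)-1) from
      Finset.sum_congr rfl fun k _ => by push_cast; ring]
    rw [Finset.sum_sub_distrib, ← Finset.mul_sum, sum_range_cast, Finset.sum_const,
      Finset.card_range]
    push_cast
    ring
  -- Step V: split Γ(2α+2k) product
  have hG2k : ∏ k ∈ range m, Real.Gamma (2*α+2*(k:ℝ))
      = Real.Gamma (2*α) * ∏ j ∈ Icc 2 m, Real.Gamma (2*α + 2*((j:ℝ)-1)) := by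
    obtain ⟨n, rfl⟩ : ∃ n, m = n + 1 := ⟨m - 1, (Nat.succ_pred_eq_of_pos hm).symm⟩
    rw [Finset.prod_range_succ', prod_Icc_two_eq,
      show Real.Gamma (2*α + 2*((0:ℕ):ℝ)) = Real.Gamma (2*α) by norm_num, mul_comm]
    congr 1
    refine Finset.prod_congr rfl fun k _ => ?_
    congr 1
    push_cast
    ring
  rw [hLHS, haj, h2prod, hG2k]
  -- Endgame: pure positivity algebra
  have hGm : 0 < Real.Gamma (2*(m:ℝ)*α) := Real.Gamma_pos_of_pos (by positivity)
  have hG2 : 0 < Real.Gamma (2*α) := Real.Gamma_pos_of_pos (by positivity)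
  have hPc : 0 < ∏ j ∈ Icc 2 m, Real.Gamma (2*α + 2*((j:ℝ)-1)) := by
    refine Finset.prod_pos fun j hj => Real.Gamma_pos_of_pos ?_
    have hj2 : (2:ℝ) ≤ j := by exact_mod_cast (Finset.mem_Icc.mp hj).1
    have : (0:ℝ) < (j:ℝ)-1 := by linarith
    positivity
  have hPb : 0 < ∏ j ∈ Icc 2 m, Real.Gamma ((2 - 1/(m:ℝ))*((j:ℝ)-1)) := by
    refine Finset.prod_pos fun j hj => Real.Gamma_pos_of_pos ?_
    have hj2 : (2:ℝ) ≤ j := by exact_mod_cast (Finset.mem_Icc.mp hj).1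
    have h1m : 1/(m:ℝ) ≤ 1 := by rw [div_le_one hm']; exact hm1
    nlinarith
  have e1 : (0:ℝ) < π^((m:ℝ)/2) := Real.rpow_pos_of_pos hπ _
  have e2 : (0:ℝ) < (2:ℝ)^((m:ℝ) - 2*(m:ℝ)*α - (m:ℝ)*((m:ℝ)-1)) := Real.rpow_pos_of_pos two_pos _
  have e3 : (0:ℝ) < (2:ℝ)^((m:ℝ)*((m:ℝ)-1) - (m:ℝ)) := Real.rpow_pos_of_pos two_pos _
  have e4 : (0:ℝ) < (2*π)^((1-(m:ℝ))/2) := Real.rpow_pos_of_pos h2π _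
  have e5 : (0:ℝ) < (m:ℝ)^(-(1:ℝ)/2) := Real.rpow_pos_of_pos hm' _
  have e6 : (0:ℝ) < (2*(m:ℝ))^(2*(m:ℝ)*α) := Real.rpow_pos_of_pos (by positivity) _
  have e7 : (0:ℝ) < (m:ℝ)^((1:ℝ)/2 - 2*(m:ℝ)*α) := Real.rpow_pos_of_pos hm' _
  have e8 : (0:ℝ) < (2*π)^(((m:ℝ)-1)/2) := Real.rpow_pos_of_pos h2π _
  -- key scalar identities
  have k1 : (2*π)^((1-(m:ℝ))/2) * (2*π)^(((m:ℝ)-1)/2) = 1 := by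
    rw [← Real.rpow_add h2π, show ((1-(m:ℝ))/2 + ((m:ℝ)-1)/2) = 0 by ring, Real.rpow_zero]
  have k2 : (2*(m:ℝ))^(2*(m:ℝ)*α) = 2^(2*(m:ℝ)*α) * (m:ℝ)^(2*(m:ℝ)*α) :=
    Real.mul_rpow (by norm_num) hm'.le
  have k3 : (m:ℝ)^(-(1:ℝ)/2) * ((m:ℝ)^((1:ℝ)/2 - 2*(m:ℝ)*α) * (m:ℝ)^(2*(m:ℝ)*α)) = 1 := by
    rw [← Real.rpow_add hm', ← Real.rpow_add hm',
      show (-(1:ℝ)/2 + ((1:ℝ)/2 - 2*(m:ℝ)*α + 2*(m:ℝ)*α)) = 0 by ring, Real.rpow_zero]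
  have k4 : (2:ℝ)^((m:ℝ) - 2*(m:ℝ)*α - (m:ℝ)*((m:ℝ)-1))
      * ((2:ℝ)^((m:ℝ)*((m:ℝ)-1) - (m:ℝ)) * (2:ℝ)^(2*(m:ℝ)*α)) = 1 := by
    rw [← Real.rpow_add two_pos, ← Real.rpow_add two_pos,
      show ((m:ℝ) - 2*(m:ℝ)*α - (m:ℝ)*((m:ℝ)-1) + ((m:ℝ)*((m:ℝ)-1) - (m:ℝ) + 2*(m:ℝ)*α)) = 0 by ring,
      Real.rpow_zero]
  rw [k2]
  exact endgame _ _ _ _ _ _ _ _ _ _ _ _ _ e1.ne' hG2.ne' hGm.ne' hPb.ne' hPc.ne' e4.ne'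
    e5.ne' e7.ne' e2.ne' e3.ne' k1 k3 k4
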